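/- arXiv:2005.00968 — 4 statements merged into one kernel-verified Lean document; each statement's English description precedes it below -/
import Mathlib

section
/- Define f(x,y) = ∫∫_{η > ν ≥ 0} g_x(η) g_y(ν) dη dν, where g_x is the noncentral chi-square density with 2 degrees of freedom and noncentrality parameter equal to the subscript, viewed as a density in its argument. Then f(x,y) is monotonically increasing in x and monotonically decreasing in y. -/
open MeasureTheory Real Set

/-- Modified Bessel function of the first kind of order zero. -/
noncomputable def besselI0 (z : ℝ) : ℝ := ∑' k : ℕ, (z ^ 2 / 4) ^ k / ((Nat.factorial k : ℝ)) ^ 2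

/-- Density of the noncentral chi-square distribution with 2 degrees of freedom
and noncentrality parameter `x`, evaluated at `η`. -/
noncomputable def g (x η : ℝ) : ℝ :=
  (1 / 2) * Real.exp (-(x + η) / 2) * besselI0 (Real.sqrt (x * η))

/-- The Bayesian comparison function `f(x,y) = ∫∫_{η > ν ≥ 0} g_x(η) g_y(ν) dη dν`. -/
noncomputable def fcomp (x y : ℝ) : ℝ :=
  ∫ η in Set.Ioi (0 : ℝ), g x η * (∫ ν in (0 : ℝ)..η, g y ν)

/-- The first-order Marcum Q-function. -/
noncomputable def marcumQ1 (a b : ℝ) : ℝ :=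
  ∫ t in Set.Ioi b, t * Real.exp (-(t ^ 2 + a ^ 2) / 2) * besselI0 (a * t)

/-- The Laguerre polynomial of degree `m`. -/
noncomputable def laguerre (m : ℕ) (z : ℝ) : ℝ :=
  ∑ k ∈ Finset.range (m + 1), (Nat.choose m k : ℝ) * (-z) ^ k / (Nat.factorial k : ℝ)

lemma summable_auxI0 (w : ℝ) : Summable (fun k : ℕ => |w| ^ k / ((Nat.factorial k : ℝ)) ^ 2) := by
  refine Summable.of_nonneg_of_le (fun k => by positivity) (fun k => ?_)
    (Real.summable_pow_div_factorial |w|)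
  have h1 : (1 : ℝ) ≤ (Nat.factorial k : ℝ) := by exact_mod_cast Nat.one_le_iff_ne_zero.2 (Nat.factorial_ne_zero k)
  have : (Nat.factorial k : ℝ) ≤ ((Nat.factorial k : ℝ)) ^ 2 := by nlinarith
  apply div_le_div_of_nonneg_left (by positivity) (by positivity) this
  
lemma summable_besselI0 (z : ℝ) : Summable (fun k : ℕ => (z ^ 2 / 4) ^ k / ((Nat.factorial k : ℝ)) ^ 2) := by
  have h : |z ^ 2 / 4| = z ^ 2 / 4 := abs_of_nonneg (by positivity)
  have := summable_auxI0 (z ^ 2 / 4)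
  rwa [h] at this

lemma one_le_besselI0 (z : ℝ) : 1 ≤ besselI0 z := by
  have h0 : (fun k : ℕ => (z ^ 2 / 4) ^ k / ((Nat.factorial k : ℝ)) ^ 2) 0 = 1 := by simp
  calc (1:ℝ) = (z ^ 2 / 4) ^ 0 / ((Nat.factorial 0 : ℝ)) ^ 2 := by simp
  _ ≤ besselI0 z := Summable.le_tsum (summable_besselI0 z) 0 (fun k _ => by positivity)

lemma besselI0_nonneg (z : ℝ) : 0 ≤ besselI0 z := le_trans zero_le_one (one_le_besselI0 z)

lemma two_k_factorial_le (k : ℕ) : (Nat.factorial (2 * k) : ℝ) ≤ 4 ^ k * ((Nat.factorial k : ℝ)) ^ 2 := by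
  have h1 : Nat.choose (2 * k) k ≤ 4 ^ k := by
    calc Nat.choose (2 * k) k ≤ ∑ i ∈ Finset.range (2 * k + 1), Nat.choose (2 * k) i :=
      Finset.single_le_sum (fun i _ => Nat.zero_le _) (Finset.mem_range.2 (by omega))
    _ = 2 ^ (2 * k) := Nat.sum_range_choose (2 * k)
    _ = 4 ^ k := by rw [pow_mul]; norm_num
  have h2 := Nat.choose_mul_factorial_mul_factorial (by omega : k ≤ 2 * k)
  have hk : 2 * k - k = k := by omega
  rw [hk] at h2
  have h3 : Nat.factorial (2 * k) ≤ 4 ^ k * (Nat.factorial k * Nat.factorial k) := by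
    rw [← h2]
    calc Nat.choose (2 * k) k * Nat.factorial k * Nat.factorial k
        ≤ 4 ^ k * Nat.factorial k * Nat.factorial k := by
          exact Nat.mul_le_mul_right _ (Nat.mul_le_mul_right _ h1)
    _ = 4 ^ k * (Nat.factorial k * Nat.factorial k) := by ring
  have := (Nat.cast_le (α := ℝ)).2 h3
  push_cast at this
  nlinarith [this]

lemma besselI0_le_exp (z : ℝ) (hz : 0 ≤ z) : besselI0 z ≤ Real.exp z := by
  have hexp : Real.exp z = ∑' n : ℕ, z ^ n / (Nat.factorial n : ℝ) := by
    rw [Real.exp_eq_exp_ℝ, NormedSpace.exp_eq_tsum_div]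
  rw [hexp]
  refine (summable_besselI0 z).tsum_le_tsum_of_inj (fun k => 2 * k) (fun a b h => by dsimp at h; omega)
    (fun c _ => by positivity) (fun k => ?_)
    (Real.summable_pow_div_factorial z)
  have h1 : (z ^ 2 / 4) ^ k = z ^ (2 * k) / 4 ^ k := by
    rw [div_pow, ← pow_mul]
  rw [h1, div_div]
  apply div_le_div_of_nonneg_left (by positivity) ?_ (two_k_factorial_le k)
  exact_mod_cast Nat.factorial_pos (2 * k)

lemma continuous_auxI0 : Continuous (fun w : ℝ => ∑' k : ℕ, w ^ k / ((Nat.factorial k : ℝ)) ^ 2) := by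
  rw [continuous_iff_continuousAt]
  intro w0
  have hball : Metric.ball w0 1 ∈ nhds w0 := Metric.ball_mem_nhds w0 one_pos
  refine ContinuousWithinAt.continuousAt ?_ hball
  refine ContinuousOn.continuousWithinAt ?_ (Metric.mem_ball_self one_pos)
  have hu : Summable (fun k : ℕ => (|w0| + 1) ^ k / ((Nat.factorial k : ℝ)) ^ 2) := by
    simpa [abs_of_nonneg (by positivity : (0:ℝ) ≤ |w0| + 1)] using summable_auxI0 (|w0| + 1)
  refine (tendstoUniformlyOn_tsum hu (fun k x hx => ?_)).continuousOn
    (Filter.Eventually.of_forall (fun n => ?_)).frequently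
  · have hxb : |x| ≤ |w0| + 1 := by
      have := mem_ball_iff_norm.1 hx
      have h2 := abs_sub_abs_le_abs_sub x w0
      simp only [Real.norm_eq_abs] at this
      linarith
    have : |x ^ k / ((Nat.factorial k : ℝ)) ^ 2| = |x| ^ k / ((Nat.factorial k : ℝ)) ^ 2 := by
      rw [abs_div, abs_pow, abs_of_nonneg (by positivity : (0:ℝ) ≤ ((Nat.factorial k : ℝ)) ^ 2)]
    rw [Real.norm_eq_abs, this]
    apply div_le_div_of_nonneg_right ?_ (by positivity)
    · exact pow_le_pow_left₀ (abs_nonneg x) hxb k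
  · exact continuousOn_finset_sum _ (fun i _ => (continuousOn_pow i).div_const _)

lemma continuous_besselI0 : Continuous besselI0 :=
  continuous_auxI0.comp (by continuity)


lemma continuous_g (x : ℝ) : Continuous (fun η => g x η) := by
  unfold g
  exact (continuous_const.mul ((Real.continuous_exp.comp (by continuity)))).mul
    (continuous_besselI0.comp (Real.continuous_sqrt.comp (continuous_const.mul continuous_id)))

lemma g_nonneg (x η : ℝ) : 0 ≤ g x η := by
  unfold g
  have := besselI0_nonneg (Real.sqrt (x * η))
  positivity

lemma g_le (x η : ℝ) (hx : 0 ≤ x) (hη : 0 ≤ η) :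
    g x η ≤ (1 / 2) * Real.exp (x / 2) * Real.exp (-(η / 4)) := by
  have hs : Real.sqrt (x * η) ≤ x + η / 4 := by
    have h1 := Real.sq_sqrt (mul_nonneg hx hη)
    have h2 := Real.sqrt_nonneg (x * η)
    nlinarith [sq_nonneg (x - η / 4), sq_nonneg (Real.sqrt (x * η) - (x + η / 4))]
  have hb : besselI0 (Real.sqrt (x * η)) ≤ Real.exp (x + η / 4) :=
    le_trans (besselI0_le_exp _ (Real.sqrt_nonneg _)) (Real.exp_le_exp.2 hs)
  unfold g
  calc (1 / 2) * Real.exp (-(x + η) / 2) * besselI0 (Real.sqrt (x * η))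
      ≤ (1 / 2) * Real.exp (-(x + η) / 2) * Real.exp (x + η / 4) := by
        apply mul_le_mul_of_nonneg_left hb (by positivity)
  _ = (1 / 2) * Real.exp (x / 2) * Real.exp (-(η / 4)) := by
        rw [mul_assoc, mul_assoc, ← Real.exp_add, ← Real.exp_add]
        ring_nf

noncomputable def pw (k : ℕ) (l : ℝ) : ℝ := Real.exp (-l) * (l ^ k / (Nat.factorial k : ℝ))

noncomputable def Pc (k : ℕ) (t : ℝ) : ℝ :=
  Real.exp (-t) * ∑ j ∈ Finset.range (k + 1), t ^ j / (Nat.factorial j : ℝ)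

noncomputable def bb (k : ℕ) (η : ℝ) : ℝ :=
  Real.exp (-(η / 2)) * η ^ k / (2 ^ (k + 1) * (Nat.factorial k : ℝ))

lemma exp_tsum (t : ℝ) : Real.exp t = ∑' n : ℕ, t ^ n / (Nat.factorial n : ℝ) := by
  rw [Real.exp_eq_exp_ℝ, NormedSpace.exp_eq_tsum_div]

lemma pw_nonneg (k : ℕ) (l : ℝ) (hl : 0 ≤ l) : 0 ≤ pw k l := by unfold pw; positivity

lemma summable_pw (l : ℝ) : Summable (fun k => pw k l) :=
  (Real.summable_pow_div_factorial l).mul_left _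

lemma tsum_pw (l : ℝ) : ∑' k, pw k l = 1 := by
  unfold pw
  rw [tsum_mul_left, ← exp_tsum, ← Real.exp_add]
  simp

lemma bb_nonneg (k : ℕ) (η : ℝ) (hη : 0 ≤ η) : 0 ≤ bb k η := by unfold bb; positivity

lemma continuous_bb (k : ℕ) : Continuous (bb k) := by
  unfold bb
  exact ((Real.continuous_exp.comp (by continuity)).mul (continuous_pow k)).div_const _

lemma Pc_nonneg (k : ℕ) (t : ℝ) (ht : 0 ≤ t) : 0 ≤ Pc k t := by
  unfold Pc
  have : 0 ≤ ∑ j ∈ Finset.range (k + 1), t ^ j / (Nat.factorial j : ℝ) :=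
    Finset.sum_nonneg (fun j _ => by positivity)
  positivity

lemma Pc_le_one (k : ℕ) (t : ℝ) (ht : 0 ≤ t) : Pc k t ≤ 1 := by
  unfold Pc
  have h1 : ∑ j ∈ Finset.range (k + 1), t ^ j / (Nat.factorial j : ℝ) ≤ Real.exp t := by
    rw [exp_tsum]
    exact Summable.sum_le_tsum _ (fun j _ => by positivity) (Real.summable_pow_div_factorial t)
  calc Real.exp (-t) * ∑ j ∈ Finset.range (k + 1), t ^ j / (Nat.factorial j : ℝ)
      ≤ Real.exp (-t) * Real.exp t := by
        exact mul_le_mul_of_nonneg_left h1 (Real.exp_pos _).le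
  _ = 1 := by rw [← Real.exp_add]; simp

lemma Pc_zero (k : ℕ) : Pc k 0 = 1 := by
  unfold Pc
  rw [Finset.sum_eq_single 0]
  · simp
  · intro j _ hj
    rw [zero_pow hj]
    simp
  · intro h
    exact absurd (Finset.mem_range.2 (Nat.succ_pos k)) h

lemma hasDerivAt_Pc (k : ℕ) (t : ℝ) :
    HasDerivAt (fun t => Pc k t) (-(Real.exp (-t) * t ^ k / (Nat.factorial k : ℝ))) t := by
  induction k with
  | zero =>
    have : (fun t => Pc 0 t) = fun t => Real.exp (-t) := by
      funext t; unfold Pc; simp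
    rw [this]
    have h := ((hasDerivAt_neg t).exp)
    convert h using 1
    simp
  | succ k ih =>
    have heq : (fun t => Pc (k + 1) t)
        = fun t => Pc k t + Real.exp (-t) * (t ^ (k + 1) / (Nat.factorial (k + 1) : ℝ)) := by
      funext t
      unfold Pc
      rw [Finset.sum_range_succ, mul_add]
    rw [heq]
    have h2 : HasDerivAt (fun t => Real.exp (-t) * (t ^ (k + 1) / (Nat.factorial (k + 1) : ℝ)))
        (Real.exp (-t) * (-1) * (t ^ (k + 1) / (Nat.factorial (k + 1) : ℝ))
          + Real.exp (-t) * ((↑(k + 1) * t ^ k) / (Nat.factorial (k + 1) : ℝ))) t := by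
      exact ((hasDerivAt_neg t).exp).mul ((hasDerivAt_pow (k + 1) t).div_const _)
    have h3 := ih.add h2
    refine h3.congr_deriv ?_
    have hfac : (Nat.factorial (k + 1) : ℝ) = (k + 1) * (Nat.factorial k : ℝ) := by
      push_cast [Nat.factorial_succ]; ring
    have hne : (Nat.factorial k : ℝ) ≠ 0 := Nat.cast_ne_zero.2 (Nat.factorial_ne_zero k)
    have hne1 : (k : ℝ) + 1 ≠ 0 := by positivity
    rw [hfac]
    push_cast
    field_simp
    ring

lemma hasDerivAt_Pc2 (k : ℕ) (ν : ℝ) :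
    HasDerivAt (fun ν => Pc k (ν / 2)) (-(bb k ν)) ν := by
  have h := (hasDerivAt_Pc k (ν / 2)).comp ν ((hasDerivAt_id ν).div_const 2)
  refine h.congr_deriv ?_
  unfold bb
  have h2 : (2 : ℝ) ^ (k + 1) = 2 ^ k * 2 := by ring
  rw [h2, div_pow]
  ring

lemma pow_le_factorial_mul_exp (t : ℝ) (ht : 0 ≤ t) (n : ℕ) :
    t ^ n / (Nat.factorial n : ℝ) ≤ Real.exp t := by
  rw [exp_tsum]
  exact Summable.le_tsum (Real.summable_pow_div_factorial t) n (fun j _ => by positivity)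

lemma integrableOn_bb (k : ℕ) : IntegrableOn (bb k) (Ioi (0 : ℝ)) := by
  have hbound : ∀ η ∈ Ioi (0:ℝ), ‖bb k η‖ ≤ 4 ^ k * Real.exp (-(1/4) * η) := by
    intro η hη
    have hη0 : (0:ℝ) ≤ η := (le_of_lt hη)
    rw [Real.norm_eq_abs, abs_of_nonneg (bb_nonneg k η hη0)]
    have h1 : (η / 4) ^ k / (Nat.factorial k : ℝ) ≤ Real.exp (η / 4) :=
      pow_le_factorial_mul_exp (η / 4) (by positivity) k
    have h2 : η ^ k ≤ 4 ^ k * (Nat.factorial k : ℝ) * Real.exp (η / 4) := by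
      have := mul_le_mul_of_nonneg_left h1 (by positivity : (0:ℝ) ≤ 4 ^ k * (Nat.factorial k : ℝ))
      calc η ^ k = 4 ^ k * (Nat.factorial k : ℝ) * ((η / 4) ^ k / (Nat.factorial k : ℝ)) := by
            rw [div_pow]
            field_simp
      _ ≤ 4 ^ k * (Nat.factorial k : ℝ) * Real.exp (η / 4) := this
    unfold bb
    rw [div_le_iff₀ (by positivity : (0:ℝ) < 2 ^ (k+1) * (Nat.factorial k : ℝ))]
    calc Real.exp (-(η / 2)) * η ^ k
        ≤ Real.exp (-(η / 2)) * (4 ^ k * (Nat.factorial k : ℝ) * Real.exp (η / 4)) :=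
          mul_le_mul_of_nonneg_left h2 (Real.exp_pos _).le
    _ = 4 ^ k * (Nat.factorial k : ℝ) * Real.exp (-(η/4)) := by
          rw [mul_comm (Real.exp (-(η/2)))]
          rw [mul_assoc, ← Real.exp_add]
          ring_nf
    _ ≤ 4 ^ k * Real.exp (-(1/4) * η) * (2 ^ (k+1) * (Nat.factorial k : ℝ)) := by
          have he : Real.exp (-(η/4)) = Real.exp (-(1/4)*η) := by ring_nf
          rw [he]
          have h4 : (1:ℝ) ≤ 2 ^ (k+1) := one_le_pow₀ one_le_two
          have hfac1 : (1:ℝ) ≤ (Nat.factorial k : ℝ) := by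
            exact_mod_cast Nat.one_le_iff_ne_zero.2 (Nat.factorial_ne_zero k)
          calc 4 ^ k * (Nat.factorial k : ℝ) * Real.exp (-(1/4)*η)
              = (4 ^ k * Real.exp (-(1/4)*η)) * (Nat.factorial k : ℝ) := by ring
          _ ≤ (4 ^ k * Real.exp (-(1/4)*η)) * (2 ^ (k+1) * (Nat.factorial k : ℝ)) := by
              apply mul_le_mul_of_nonneg_left ?_ (by positivity)
              exact le_mul_of_one_le_left (by linarith) h4
          _ = 4 ^ k * Real.exp (-(1/4)*η) * (2 ^ (k+1) * (Nat.factorial k : ℝ)) := by ring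
  have hexp : IntegrableOn (fun η => 4 ^ k * Real.exp (-(1/4) * η)) (Ioi (0:ℝ)) :=
    (exp_neg_integrableOn_Ioi 0 (by norm_num : (0:ℝ) < 1/4)).const_mul _
  exact Integrable.mono' hexp ((continuous_bb k).aestronglyMeasurable.restrict)
    ((ae_restrict_iff' measurableSet_Ioi).2 (Filter.Eventually.of_forall hbound))

lemma tendsto_Pc2 (k : ℕ) : Filter.Tendsto (fun ν => Pc k (ν / 2)) Filter.atTop (nhds 0) := by
  have hdiv : Filter.Tendsto (fun ν : ℝ => ν / 2) Filter.atTop Filter.atTop :=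
    Filter.tendsto_id.atTop_div_const (by norm_num)
  have hPc : Filter.Tendsto (fun s => Pc k s) Filter.atTop (nhds 0) := by
    have heq : (fun s => Pc k s)
        = fun s => ∑ j ∈ Finset.range (k + 1), (s ^ j * Real.exp (-s)) / (Nat.factorial j : ℝ) := by
      funext s
      unfold Pc
      rw [Finset.mul_sum]
      congr 1
      funext j
      ring
    rw [heq]
    have : Filter.Tendsto (fun s : ℝ => ∑ j ∈ Finset.range (k + 1),
        (s ^ j * Real.exp (-s)) / (Nat.factorial j : ℝ)) Filter.atTop (nhds (∑ j ∈ Finset.range (k+1), 0 / (Nat.factorial j : ℝ))) := by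
      apply tendsto_finset_sum
      intro j _
      exact (tendsto_pow_mul_exp_neg_atTop_nhds_zero j).div_const _
    simpa using this
  exact hPc.comp hdiv

lemma integral_bb_Ioi (k : ℕ) (ν : ℝ) (hν : 0 ≤ ν) :
    ∫ η in Ioi ν, bb k η = Pc k (ν / 2) := by
  have hderiv : ∀ x ∈ Ici ν, HasDerivAt (fun ν => -(Pc k (ν / 2))) (bb k x) x := by
    intro x _
    have h := (hasDerivAt_Pc2 k x).neg
    rw [neg_neg] at h
    exact h
  have hint : IntegrableOn (bb k) (Ioi ν) :=
    (integrableOn_bb k).mono_set (Ioi_subset_Ioi hν)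
  have htend : Filter.Tendsto (fun ν => -(Pc k (ν / 2))) Filter.atTop (nhds 0) := by
    simpa using (tendsto_Pc2 k).neg
  have := integral_Ioi_of_hasDerivAt_of_tendsto' hderiv hint htend
  rw [this]
  ring

lemma integral_bb_Ioc (k : ℕ) (ν : ℝ) (hν : 0 ≤ ν) :
    ∫ η in Ioc 0 ν, bb k η = 1 - Pc k (ν / 2) := by
  have hu : Ioc (0:ℝ) ν ∪ Ioi ν = Ioi 0 := Ioc_union_Ioi_eq_Ioi hν
  have hdisj : Disjoint (Ioc (0:ℝ) ν) (Ioi ν) := Ioc_disjoint_Ioi le_rfl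
  have h1 : IntegrableOn (bb k) (Ioc (0:ℝ) ν) :=
    (integrableOn_bb k).mono_set Ioc_subset_Ioi_self
  have h2 : IntegrableOn (bb k) (Ioi ν) :=
    (integrableOn_bb k).mono_set (Ioi_subset_Ioi hν)
  have := setIntegral_union hdisj measurableSet_Ioi h1 h2
  rw [hu] at this
  have h3 : ∫ η in Ioi (0:ℝ), bb k η = Pc k 0 := by
    simpa using integral_bb_Ioi k 0 le_rfl
  rw [Pc_zero] at h3
  rw [h3, integral_bb_Ioi k ν hν] at this
  linarith

lemma g_series (x η : ℝ) (hx : 0 ≤ x) (hη : 0 ≤ η) :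
    g x η = ∑' k, pw k (x / 2) * bb k η := by
  unfold g besselI0
  rw [Real.sq_sqrt (mul_nonneg hx hη), ← tsum_mul_left]
  apply tsum_congr
  intro k
  unfold pw bb
  have hexp : Real.exp (-(x + η) / 2) = Real.exp (-(x / 2)) * Real.exp (-(η / 2)) := by
    rw [← Real.exp_add]; ring_nf
  have e1 : (x * η / 4) ^ k = x ^ k * η ^ k / (2 ^ k * 2 ^ k) := by
    rw [div_pow, mul_pow]
    congr 1
    rw [show (4:ℝ) = 2 * 2 by norm_num, mul_pow]
  have e2 : (x / 2) ^ k = x ^ k / 2 ^ k := div_pow x 2 k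
  rw [hexp, e1, e2]
  ring

noncomputable def Tt (j : ℕ) (l : ℝ) : ℝ := ∑' i : ℕ, pw (i + j) l

lemma summable_pw_tail (j : ℕ) (l : ℝ) : Summable (fun i => pw (i + j) l) :=
  (summable_nat_add_iff (f := fun k => pw k l) j).2 (summable_pw l)

lemma Tt_eq (j : ℕ) (l : ℝ) : Tt j l = 1 - ∑ i ∈ Finset.range j, pw i l := by
  have h := Summable.sum_add_tsum_nat_add j (summable_pw l)
  rw [tsum_pw] at h
  unfold Tt
  linarith

lemma Tt_nonneg (j : ℕ) (l : ℝ) (hl : 0 ≤ l) : 0 ≤ Tt j l :=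
  tsum_nonneg (fun i => pw_nonneg _ _ hl)

lemma Tt_le_one (j : ℕ) (l : ℝ) (hl : 0 ≤ l) : Tt j l ≤ 1 := by
  rw [Tt_eq]
  have : 0 ≤ ∑ i ∈ Finset.range j, pw i l := Finset.sum_nonneg (fun i _ => pw_nonneg _ _ hl)
  linarith

lemma Pc_antitoneOn (m : ℕ) : AntitoneOn (fun t => Pc m t) (Ici (0 : ℝ)) := by
  apply antitoneOn_of_deriv_nonpos (convex_Ici 0)
  · exact fun t _ => (hasDerivAt_Pc m t).continuousAt.continuousWithinAt
  · intro t ht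
    exact (hasDerivAt_Pc m t).differentiableAt.differentiableWithinAt
  · intro t ht
    rw [interior_Ici] at ht
    rw [(hasDerivAt_Pc m t).deriv]
    have : 0 ≤ Real.exp (-t) * t ^ m / (Nat.factorial m : ℝ) := by
      have ht' : (0:ℝ) ≤ t := le_of_lt ht
      positivity
    linarith

lemma Tt_mono (j : ℕ) (l l' : ℝ) (hl : 0 ≤ l) (hll' : l ≤ l') : Tt j l ≤ Tt j l' := by
  rw [Tt_eq, Tt_eq]
  rcases Nat.eq_zero_or_pos j with hj | hj
  · subst hj; simp
  · obtain ⟨m, rfl⟩ : ∃ m, j = m + 1 := ⟨j - 1, by omega⟩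
    have hsum : ∀ l : ℝ, ∑ i ∈ Finset.range (m + 1), pw i l = Pc m l := by
      intro l
      unfold pw Pc
      rw [Finset.mul_sum]
    rw [hsum, hsum]
    have := Pc_antitoneOn m (mem_Ici.2 hl) (mem_Ici.2 (le_trans hl hll')) hll'
    simp only at this
    linarith

lemma summable_pw_Pc (l t : ℝ) (hl : 0 ≤ l) (ht : 0 ≤ t) :
    Summable (fun k => pw k l * Pc k t) := by
  refine Summable.of_nonneg_of_le (fun k => mul_nonneg (pw_nonneg _ _ hl) (Pc_nonneg _ _ ht))
    (fun k => ?_) (summable_pw l)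
  exact mul_le_of_le_one_right (pw_nonneg _ _ hl) (Pc_le_one _ _ ht)

lemma summable_q_Tt (l t : ℝ) (hl : 0 ≤ l) (ht : 0 ≤ t) :
    Summable (fun j => t ^ j / (Nat.factorial j : ℝ) * Tt j l) := by
  refine Summable.of_nonneg_of_le
    (fun j => mul_nonneg (by positivity) (Tt_nonneg _ _ hl)) (fun j => ?_)
    (Real.summable_pow_div_factorial t)
  exact mul_le_of_le_one_right (by positivity) (Tt_le_one _ _ hl)

set_option maxHeartbeats 1000000 in
lemma key_swap (l t : ℝ) (hl : 0 ≤ l) (ht : 0 ≤ t) :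
    ∑' k, pw k l * Pc k t
      = Real.exp (-t) * ∑' j, t ^ j / (Nat.factorial j : ℝ) * Tt j l := by
  have hq : ∀ j : ℕ, (0:ℝ) ≤ t ^ j / (Nat.factorial j : ℝ) := fun j => by positivity
  have hpw : ∀ k, 0 ≤ pw k l := fun k => pw_nonneg _ _ hl
  have hcc : ∀ j, (0:ℝ) ≤ Real.exp (-t) * (t ^ j / (Nat.factorial j : ℝ)) :=
    fun j => mul_nonneg (Real.exp_pos _).le (hq j)
  have hL : 0 ≤ ∑' k, pw k l * Pc k t :=
    tsum_nonneg (fun k => mul_nonneg (hpw k) (Pc_nonneg _ _ ht))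
  have hR : 0 ≤ Real.exp (-t) * ∑' j, t ^ j / (Nat.factorial j : ℝ) * Tt j l :=
    mul_nonneg (Real.exp_pos _).le
      (tsum_nonneg (fun j => mul_nonneg (hq j) (Tt_nonneg _ _ hl)))
  rw [← ENNReal.ofReal_eq_ofReal_iff hL hR]
  set c : ℕ → ENNReal := fun j => ENNReal.ofReal (Real.exp (-t) * (t ^ j / (Nat.factorial j : ℝ))) with hc'
  set P : ℕ → ENNReal := fun k => ENNReal.ofReal (pw k l) with hP
  set F : ℕ → ℕ → ENNReal := fun k j => if j ≤ k then P k * c j else 0 with hF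
  have step1 : ENNReal.ofReal (∑' k, pw k l * Pc k t) = ∑' k, ∑' j, F k j := by
    rw [ENNReal.ofReal_tsum_of_nonneg
      (fun k => mul_nonneg (hpw k) (Pc_nonneg _ _ ht)) (summable_pw_Pc l t hl ht)]
    apply tsum_congr
    intro k
    have hterm : pw k l * Pc k t
        = ∑ j ∈ Finset.range (k + 1), pw k l * (Real.exp (-t) * (t ^ j / (Nat.factorial j : ℝ))) := by
      unfold Pc
      rw [Finset.mul_sum, Finset.mul_sum]
    rw [hterm, ENNReal.ofReal_sum_of_nonneg (fun j _ => mul_nonneg (hpw k) (hcc j)),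
      tsum_eq_sum (s := Finset.range (k + 1))
        (fun j hj => by
          simp only [hF]
          rw [if_neg (by simp only [Finset.mem_range] at hj; omega)])]
    apply Finset.sum_congr rfl
    intro j hj
    simp only [hF]
    rw [if_pos (by simp only [Finset.mem_range] at hj; omega), hP, hc',
      ← ENNReal.ofReal_mul (hpw k)]
  have step2 : ∀ j, ∑' k, F k j = c j * ENNReal.ofReal (Tt j l) := by
    intro j
    have hsummable_ite : Summable (fun k => if j ≤ k then pw k l else 0) := by
      refine Summable.of_nonneg_of_le (fun k => ?_) (fun k => ?_) (summable_pw l)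
      · split <;> simp [hpw k, le_refl]
      · split
        · exact le_refl _
        · exact hpw k
    have hreal : (∑' k, if j ≤ k then pw k l else 0) = Tt j l := by
      have hsplit := Summable.sum_add_tsum_nat_add (f := fun k => if j ≤ k then pw k l else 0) j
        hsummable_ite
      have hzero : (∑ i ∈ Finset.range j, if j ≤ i then pw i l else 0) = 0 := by
        apply Finset.sum_eq_zero
        intro i hi
        rw [if_neg (by simp only [Finset.mem_range] at hi; omega)]
      have htail : (fun i => if j ≤ i + j then pw (i + j) l else 0) = fun i => pw (i + j) l := by
        funext i
        rw [if_pos (by omega)]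
      rw [hzero, zero_add, htail] at hsplit
      unfold Tt
      exact hsplit.symm
    calc ∑' k, F k j = ∑' k, (if j ≤ k then P k else 0) * c j := by
          apply tsum_congr
          intro k
          simp only [hF]
          split <;> simp
    _ = (∑' k, if j ≤ k then P k else 0) * c j := ENNReal.tsum_mul_right
    _ = c j * ENNReal.ofReal (Tt j l) := by
        rw [mul_comm]
        congr 1
        have : (fun k => if j ≤ k then P k else 0)
            = fun k => ENNReal.ofReal (if j ≤ k then pw k l else 0) := by
          funext k
          simp only [hP]
          split <;> simp
        rw [this, ← ENNReal.ofReal_tsum_of_nonneg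
          (fun k => by split <;> simp [hpw k]) hsummable_ite, hreal]
  rw [step1, ENNReal.tsum_comm]
  calc ∑' j, ∑' k, F k j = ∑' j, c j * ENNReal.ofReal (Tt j l) := tsum_congr step2
  _ = ∑' j, ENNReal.ofReal (Real.exp (-t))
        * ENNReal.ofReal (t ^ j / (Nat.factorial j : ℝ) * Tt j l) := by
      apply tsum_congr
      intro j
      show ENNReal.ofReal (Real.exp (-t) * (t ^ j / (Nat.factorial j : ℝ)))
          * ENNReal.ofReal (Tt j l) = _
      rw [ENNReal.ofReal_mul (Real.exp_pos (-t)).le, mul_assoc, ← ENNReal.ofReal_mul (hq j)]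
  _ = ENNReal.ofReal (Real.exp (-t))
        * ENNReal.ofReal (∑' j, t ^ j / (Nat.factorial j : ℝ) * Tt j l) := by
      rw [ENNReal.tsum_mul_left]
      congr 1
      rw [ENNReal.ofReal_tsum_of_nonneg
        (fun j => mul_nonneg (hq j) (Tt_nonneg _ _ hl)) (summable_q_Tt l t hl ht)]
  _ = ENNReal.ofReal (Real.exp (-t) * ∑' j, t ^ j / (Nat.factorial j : ℝ) * Tt j l) :=
      (ENNReal.ofReal_mul (Real.exp_pos (-t)).le).symm

lemma integrableOn_g (x : ℝ) (hx : 0 ≤ x) : IntegrableOn (fun η => g x η) (Ioi (0:ℝ)) := by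
  have hexp : IntegrableOn (fun η : ℝ => (1/2) * Real.exp (x/2) * Real.exp (-(1/4) * η))
      (Ioi (0:ℝ)) :=
    (exp_neg_integrableOn_Ioi 0 (by norm_num : (0:ℝ) < 1/4)).const_mul _
  refine Integrable.mono' hexp ((continuous_g x).aestronglyMeasurable.restrict) ?_
  refine (ae_restrict_iff' measurableSet_Ioi).2 (Filter.Eventually.of_forall (fun η hη => ?_))
  rw [Real.norm_eq_abs, abs_of_nonneg (g_nonneg x η)]
  have h1 := g_le x η hx (le_of_lt hη)
  have h2 : -(η/4) = -(1/4) * η := by ring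
  rw [h2] at h1
  exact h1

lemma integral_g_Ioi (x ν : ℝ) (hx : 0 ≤ x) (hν : 0 ≤ ν) :
    ∫ η in Ioi ν, g x η = ∑' k, pw k (x / 2) * Pc k (ν / 2) := by
  have hx2 : (0:ℝ) ≤ x / 2 := by linarith
  have hν2 : (0:ℝ) ≤ ν / 2 := by linarith
  have hcong : ∫ η in Ioi ν, g x η = ∫ η in Ioi ν, (∑' k, pw k (x/2) * bb k η) := by
    apply setIntegral_congr_fun measurableSet_Ioi
    intro η hη
    exact g_series x η hx (le_trans hν (le_of_lt hη))
  have hint : ∀ k : ℕ, IntegrableOn (fun η => pw k (x/2) * bb k η) (Ioi ν) :=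
    fun k => ((integrableOn_bb k).mono_set (Ioi_subset_Ioi hν)).const_mul _
  have hval : ∀ k : ℕ, ∫ η in Ioi ν, pw k (x/2) * bb k η = pw k (x/2) * Pc k (ν/2) := by
    intro k
    rw [MeasureTheory.integral_const_mul, integral_bb_Ioi k ν hν]
  have hnn : ∀ k : ℕ, ∀ η ∈ Ioi ν, 0 ≤ pw k (x/2) * bb k η := by
    intro k η hη
    exact mul_nonneg (pw_nonneg _ _ hx2) (bb_nonneg _ _ (le_trans hν (le_of_lt hη)))
  rw [hcong, MeasureTheory.integral_tsum (f := fun k η => pw k (x/2) * bb k η)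
    (fun k => (continuous_const.mul (continuous_bb k)).aestronglyMeasurable.restrict) ?_]
  · exact tsum_congr hval
  · have heq : ∀ k : ℕ, (∫⁻ η in Ioi ν, ‖pw k (x/2) * bb k η‖₊)
        = ENNReal.ofReal (pw k (x/2) * Pc k (ν/2)) := by
      intro k
      have h1 : (∫⁻ η in Ioi ν, ‖pw k (x/2) * bb k η‖₊)
          = ∫⁻ η in Ioi ν, ENNReal.ofReal (pw k (x/2) * bb k η) := by
        apply lintegral_congr_ae
        refine (ae_restrict_iff' measurableSet_Ioi).2 (Filter.Eventually.of_forall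
          (fun η hη => ?_))
        exact enorm_eq_ofReal (hnn k η hη)
      rw [h1, ← ofReal_integral_eq_lintegral_ofReal (hint k)
        ((ae_restrict_iff' measurableSet_Ioi).2 (Filter.Eventually.of_forall (hnn k))), hval k]
    calc ∑' k, (∫⁻ η in Ioi ν, ‖pw k (x/2) * bb k η‖₊)
        = ∑' k, ENNReal.ofReal (pw k (x/2) * Pc k (ν/2)) := tsum_congr heq
    _ = ENNReal.ofReal (∑' k, pw k (x/2) * Pc k (ν/2)) :=
        (ENNReal.ofReal_tsum_of_nonneg
          (fun k => mul_nonneg (pw_nonneg _ _ hx2) (Pc_nonneg _ _ hν2))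
          (summable_pw_Pc _ _ hx2 hν2)).symm
    _ ≠ ⊤ := ENNReal.ofReal_ne_top

lemma WW_le_one (l t : ℝ) (hl : 0 ≤ l) (ht : 0 ≤ t) : ∑' k, pw k l * Pc k t ≤ 1 := by
  have h := Summable.tsum_le_tsum (f := fun k => pw k l * Pc k t) (g := fun k => pw k l)
    (fun k => mul_le_of_le_one_right (pw_nonneg _ _ hl) (Pc_le_one _ _ ht))
    (summable_pw_Pc l t hl ht) (summable_pw l)
  rwa [tsum_pw] at h

lemma WW_nonneg (l t : ℝ) (hl : 0 ≤ l) (ht : 0 ≤ t) : 0 ≤ ∑' k, pw k l * Pc k t :=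
  tsum_nonneg (fun k => mul_nonneg (pw_nonneg _ _ hl) (Pc_nonneg _ _ ht))

lemma WW_mono (l l' t : ℝ) (hl : 0 ≤ l) (hll' : l ≤ l') (ht : 0 ≤ t) :
    ∑' k, pw k l * Pc k t ≤ ∑' k, pw k l' * Pc k t := by
  have hl' : 0 ≤ l' := le_trans hl hll'
  rw [key_swap l t hl ht, key_swap l' t hl' ht]
  apply mul_le_mul_of_nonneg_left ?_ (Real.exp_pos _).le
  refine Summable.tsum_le_tsum (fun j => ?_) (summable_q_Tt l t hl ht) (summable_q_Tt l' t hl' ht)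
  exact mul_le_mul_of_nonneg_left (Tt_mono j l l' hl hll') (by positivity)

lemma integral_g_mass (x : ℝ) (hx : 0 ≤ x) : ∫ η in Ioi (0:ℝ), g x η = 1 := by
  rw [integral_g_Ioi x 0 hx le_rfl]
  have : ∀ k : ℕ, pw k (x/2) * Pc k (0/2 : ℝ) = pw k (x/2) := by
    intro k
    norm_num [Pc_zero]
  rw [tsum_congr this, tsum_pw]

lemma S_mono (x x' ν : ℝ) (hx : 0 ≤ x) (hxx' : x ≤ x') (hν : 0 ≤ ν) :
    ∫ η in Ioi ν, g x η ≤ ∫ η in Ioi ν, g x' η := by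
  rw [integral_g_Ioi x ν hx hν, integral_g_Ioi x' ν (le_trans hx hxx') hν]
  exact WW_mono (x/2) (x'/2) (ν/2) (by linarith) (by linarith) (by linarith)

lemma S_le_one (x ν : ℝ) (hx : 0 ≤ x) (hν : 0 ≤ ν) : ∫ η in Ioi ν, g x η ≤ 1 := by
  rw [integral_g_Ioi x ν hx hν]
  exact WW_le_one _ _ (by linarith) (by linarith)

lemma integral_g_Ioc (x ν : ℝ) (hx : 0 ≤ x) (hν : 0 ≤ ν) :
    ∫ η in Ioc 0 ν, g x η = 1 - ∑' k, pw k (x / 2) * Pc k (ν / 2) := by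
  have hu : Ioc (0:ℝ) ν ∪ Ioi ν = Ioi 0 := Ioc_union_Ioi_eq_Ioi hν
  have h1 : IntegrableOn (fun η => g x η) (Ioc (0:ℝ) ν) :=
    (integrableOn_g x hx).mono_set Ioc_subset_Ioi_self
  have h2 : IntegrableOn (fun η => g x η) (Ioi ν) :=
    (integrableOn_g x hx).mono_set (Ioi_subset_Ioi hν)
  have := setIntegral_union (Ioc_disjoint_Ioi le_rfl) measurableSet_Ioi h1 h2
  rw [hu, integral_g_mass x hx, integral_g_Ioi x ν hx hν] at this
  linarith

lemma G_anti (x x' ν : ℝ) (hx : 0 ≤ x) (hxx' : x ≤ x') (hν : 0 ≤ ν) :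
    ∫ η in Ioc 0 ν, g x' η ≤ ∫ η in Ioc 0 ν, g x η := by
  rw [integral_g_Ioc x ν hx hν, integral_g_Ioc x' ν (le_trans hx hxx') hν]
  have := WW_mono (x/2) (x'/2) (ν/2) (by linarith) (by linarith) (by linarith)
  linarith

noncomputable def Gfun (y η : ℝ) : ℝ := ∫ t in Ioc (0:ℝ) η, g y t
noncomputable def Sfun (x ν : ℝ) : ℝ := ∫ η in Ioi ν, g x η

lemma Gfun_mono (y : ℝ) (hy : 0 ≤ y) : Monotone (Gfun y) := by
  intro a b hab
  apply setIntegral_mono_set ((integrableOn_g y hy).mono_set Ioc_subset_Ioi_self)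
    (Filter.Eventually.of_forall (fun t => g_nonneg y t))
  exact HasSubset.Subset.eventuallyLE (Ioc_subset_Ioc_right hab)

lemma Gfun_nonneg (y η : ℝ) : 0 ≤ Gfun y η :=
  setIntegral_nonneg measurableSet_Ioc (fun t _ => g_nonneg y t)

lemma Gfun_le_one (y η : ℝ) (hy : 0 ≤ y) : Gfun y η ≤ 1 := by
  have h : Gfun y η ≤ ∫ t in Ioi (0:ℝ), g y t := by
    apply setIntegral_mono_set (integrableOn_g y hy)
      (Filter.Eventually.of_forall (fun t => g_nonneg y t))
    exact HasSubset.Subset.eventuallyLE Ioc_subset_Ioi_self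
  rw [integral_g_mass y hy] at h
  exact h

lemma fcomp_eq (x y : ℝ) : fcomp x y = ∫ η in Ioi (0:ℝ), g x η * Gfun y η := by
  unfold fcomp
  apply setIntegral_congr_fun measurableSet_Ioi
  intro η hη
  show g x η * (∫ ν in (0:ℝ)..η, g y ν) = g x η * Gfun y η
  rw [intervalIntegral.integral_of_le (le_of_lt hη)]
  rfl

lemma aesm_integrand (x y : ℝ) (hy : 0 ≤ y) :
    AEStronglyMeasurable (fun η => g x η * Gfun y η) (volume.restrict (Ioi (0:ℝ))) :=
  ((continuous_g x).aestronglyMeasurable.restrict).mul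
    ((Gfun_mono y hy).measurable.aestronglyMeasurable.restrict)

lemma integrableOn_integrand (x y : ℝ) (hx : 0 ≤ x) (hy : 0 ≤ y) :
    IntegrableOn (fun η => g x η * Gfun y η) (Ioi (0:ℝ)) := by
  refine Integrable.mono' (integrableOn_g x hx) (aesm_integrand x y hy) ?_
  refine (ae_restrict_iff' measurableSet_Ioi).2 (Filter.Eventually.of_forall (fun η hη => ?_))
  rw [Real.norm_eq_abs, abs_of_nonneg (mul_nonneg (g_nonneg x η) (Gfun_nonneg y η))]
  exact mul_le_of_le_one_right (g_nonneg x η) (Gfun_le_one y η hy)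

lemma fcomp_anti (x y y' : ℝ) (hx : 0 ≤ x) (hy : 0 ≤ y) (hyy' : y ≤ y') :
    fcomp x y' ≤ fcomp x y := by
  rw [fcomp_eq x y', fcomp_eq x y]
  apply setIntegral_mono_on (integrableOn_integrand x y' hx (le_trans hy hyy'))
    (integrableOn_integrand x y hx hy) measurableSet_Ioi
  intro η hη
  exact mul_le_mul_of_nonneg_left (G_anti y y' η hy hyy' (le_of_lt hη)) (g_nonneg x η)

set_option maxHeartbeats 1000000 in
lemma fcomp_lint (x y : ℝ) (hx : 0 ≤ x) (hy : 0 ≤ y) :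
    fcomp x y
      = (∫⁻ ν in Ioi (0:ℝ), ENNReal.ofReal (g y ν) * ENNReal.ofReal (Sfun x ν)).toReal := by
  classical
  rw [fcomp_eq x y]
  rw [MeasureTheory.integral_eq_lintegral_of_nonneg_ae
    (Filter.Eventually.of_forall (fun η => mul_nonneg (g_nonneg x η) (Gfun_nonneg y η)))
    (aesm_integrand x y hy)]
  congr 1
  set Kc : ℝ → ℝ → ENNReal := fun η ν =>
    if ν < η then ENNReal.ofReal (g x η) * ENNReal.ofReal (g y ν) else 0 with hK
  have hKmeas : Measurable (Function.uncurry Kc) := by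
    apply Measurable.ite
    · exact measurableSet_lt measurable_snd measurable_fst
    · exact ((ENNReal.measurable_ofReal.comp ((continuous_g x).measurable.comp measurable_fst)).mul
        (ENNReal.measurable_ofReal.comp ((continuous_g y).measurable.comp measurable_snd)))
    · exact measurable_const
  calc ∫⁻ η in Ioi (0:ℝ), ENNReal.ofReal (g x η * Gfun y η)
      = ∫⁻ η in Ioi (0:ℝ), ∫⁻ ν in Ioi (0:ℝ), Kc η ν := by
        apply setLIntegral_congr_fun measurableSet_Ioi
        intro η hη
        dsimp only
        have h1 : (fun ν => Kc η ν)
            = (Iio η).indicator (fun ν => ENNReal.ofReal (g x η) * ENNReal.ofReal (g y ν)) := by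
          funext ν
          simp only [hK, Set.indicator_apply, mem_Iio]
        rw [h1, lintegral_indicator measurableSet_Iio,
          Measure.restrict_restrict measurableSet_Iio, Set.Iio_inter_Ioi,
          Measure.restrict_congr_set Ioo_ae_eq_Ioc,
          lintegral_const_mul' _ _ ENNReal.ofReal_ne_top,
          ENNReal.ofReal_mul (g_nonneg x η)]
        congr 1
        rw [← ofReal_integral_eq_lintegral_ofReal
          ((integrableOn_g y hy).mono_set Ioc_subset_Ioi_self)
          (Filter.Eventually.of_forall (fun t => g_nonneg y t))]
        rfl
  _ = ∫⁻ ν in Ioi (0:ℝ), ∫⁻ η in Ioi (0:ℝ), Kc η ν :=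
        lintegral_lintegral_swap hKmeas.aemeasurable
  _ = ∫⁻ ν in Ioi (0:ℝ), ENNReal.ofReal (g y ν) * ENNReal.ofReal (Sfun x ν) := by
        apply setLIntegral_congr_fun measurableSet_Ioi
        intro ν hν
        dsimp only
        have h1 : (fun η => Kc η ν)
            = (Ioi ν).indicator (fun η => ENNReal.ofReal (g x η) * ENNReal.ofReal (g y ν)) := by
          funext η
          simp only [hK, Set.indicator_apply, mem_Ioi]
        rw [h1, lintegral_indicator measurableSet_Ioi,
          Measure.restrict_restrict measurableSet_Ioi,
          Set.inter_eq_left.2 (Ioi_subset_Ioi (le_of_lt hν)),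
          lintegral_mul_const' _ _ ENNReal.ofReal_ne_top]
        rw [← ofReal_integral_eq_lintegral_ofReal
          ((integrableOn_g x hx).mono_set (Ioi_subset_Ioi (le_of_lt hν)))
          (Filter.Eventually.of_forall (fun t => g_nonneg x t))]
        rw [mul_comm]
        rfl

lemma lint_le_one (x y : ℝ) (hx : 0 ≤ x) (hy : 0 ≤ y) :
    (∫⁻ ν in Ioi (0:ℝ), ENNReal.ofReal (g y ν) * ENNReal.ofReal (Sfun x ν)) ≤ 1 := by
  have h1 : (∫⁻ ν in Ioi (0:ℝ), ENNReal.ofReal (g y ν) * ENNReal.ofReal (Sfun x ν))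
      ≤ ∫⁻ ν in Ioi (0:ℝ), ENNReal.ofReal (g y ν) := by
    apply lintegral_mono_ae
    refine (ae_restrict_iff' measurableSet_Ioi).2 (Filter.Eventually.of_forall (fun ν hν => ?_))
    have h2 : ENNReal.ofReal (Sfun x ν) ≤ 1 := by
      rw [show (1 : ENNReal) = ENNReal.ofReal 1 by simp]
      exact ENNReal.ofReal_le_ofReal (S_le_one x ν hx (le_of_lt hν))
    calc ENNReal.ofReal (g y ν) * ENNReal.ofReal (Sfun x ν)
        ≤ ENNReal.ofReal (g y ν) * 1 := mul_le_mul_right h2 _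
    _ = ENNReal.ofReal (g y ν) := mul_one _
  have h3 : (∫⁻ ν in Ioi (0:ℝ), ENNReal.ofReal (g y ν)) = 1 := by
    rw [← ofReal_integral_eq_lintegral_ofReal (integrableOn_g y hy)
      (Filter.Eventually.of_forall (fun t => g_nonneg y t)), integral_g_mass y hy]
    simp
  rw [h3] at h1
  exact h1

lemma fcomp_mono (x x' y : ℝ) (hx : 0 ≤ x) (hxx' : x ≤ x') (hy : 0 ≤ y) :
    fcomp x y ≤ fcomp x' y := by
  rw [fcomp_lint x y hx hy, fcomp_lint x' y (le_trans hx hxx') hy]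
  apply ENNReal.toReal_mono
  · exact ((lint_le_one x' y (le_trans hx hxx') hy).trans_lt ENNReal.one_lt_top).ne
  · apply lintegral_mono_ae
    refine (ae_restrict_iff' measurableSet_Ioi).2 (Filter.Eventually.of_forall (fun ν hν => ?_))
    exact mul_le_mul_right (ENNReal.ofReal_le_ofReal
      (S_mono x x' ν hx hxx' (le_of_lt hν))) _

/-- f(x,y) is monotonically increasing in x and monotonically decreasing in y. -/
theorem fcomp_monotone :
    (∀ y : ℝ, 0 ≤ y → MonotoneOn (fun x => fcomp x y) (Set.Ici 0)) ∧
    (∀ x : ℝ, 0 ≤ x → AntitoneOn (fun y => fcomp x y) (Set.Ici 0)) := by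
  constructor
  · intro y hy a ha b _ hab
    exact fcomp_mono a b y ha hab hy
  · intro x hx a ha b _ hab
    exact fcomp_anti x a b hx ha hab
end

section
/- For |ω| < 1 and any real z, the Laguerre polynomial generating function identity holds: Σ_{m=0}^∞ L_m(z) ω^m = (1/(1−ω)) · exp(ωz/(ω−1)). -/
open MeasureTheory Real Set

/-- Laguerre polynomial generating function. -/
theorem laguerre_generating_function (ω z : ℝ) (hω : |ω| < 1) :
    ∑' m : ℕ, laguerre m z * ω ^ m = (1 / (1 - ω)) * Real.exp (ω * z / (ω - 1)) := by
  have hω' : ‖ω‖ < 1 := by rwa [Real.norm_eq_abs]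
  have h1 : (1 : ℝ) - ω ≠ 0 := by
    intro h; have : ω = 1 := by linarith
    rw [this] at hω; norm_num at hω
  have h1' : (1 : ℝ) - |ω| ≠ 0 := by
    have := abs_nonneg ω; intro h; nlinarith
  set c : ℕ × ℕ → ℝ := fun p => (-z) ^ p.1 / (Nat.factorial p.1 : ℝ) *
      (((p.2 + p.1).choose p.1 : ℝ) * ω ^ (p.1 + p.2)) with hc
  -- absolute summability
  have habs : Summable fun p : ℕ × ℕ => |c p| := by
    have hinner : ∀ k : ℕ, Summable fun n => |c (k, n)| := by
      intro k
      have := (summable_choose_mul_geometric_of_norm_lt_one (R := ℝ) k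
        (r := |ω|) (by rwa [Real.norm_eq_abs, abs_abs])).mul_left
        (|z| ^ k / (Nat.factorial k : ℝ) * |ω| ^ k)
      apply this.congr
      intro n
      simp only [hc, abs_mul, abs_div, abs_pow, abs_abs, abs_neg, Nat.abs_cast, pow_add]
      ring
    rw [summable_prod_of_nonneg (fun p => abs_nonneg _)]
    refine ⟨hinner, ?_⟩
    have hsum : ∀ k : ℕ, ∑' n, |c (k, n)| =
        ((|z| * |ω| / (1 - |ω|)) ^ k / (Nat.factorial k : ℝ)) * (1 / (1 - |ω|)) := by
      intro k
      have heq : ∀ n : ℕ, |c (k, n)| = (|z| ^ k / (Nat.factorial k : ℝ) * |ω| ^ k) *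
          (((n + k).choose k : ℝ) * |ω| ^ n) := by
        intro n
        simp only [hc, abs_mul, abs_div, abs_pow, abs_abs, abs_neg, Nat.abs_cast, pow_add]
        ring
      rw [tsum_congr heq, tsum_mul_left,
        tsum_choose_mul_geometric_of_norm_lt_one k (by rwa [Real.norm_eq_abs, abs_abs])]
      rw [div_pow, mul_pow]
      simp only [div_eq_mul_inv, mul_inv, pow_succ, one_mul]
      ring
    apply Summable.congr _ (fun k => (hsum k).symm)
    exact (Real.summable_pow_div_factorial _).mul_right _
  have hcs : Summable c := habs.of_abs
  -- LHS equals the double sum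
  have hL : ∑' m : ℕ, laguerre m z * ω ^ m = ∑' p : ℕ × ℕ, c p := by
    have hE : ∑' p : ℕ × ℕ, c p =
        ∑' x : Σ n : ℕ, (Finset.HasAntidiagonal.antidiagonal n : Finset (ℕ × ℕ)), c x.2 :=
      (Finset.HasAntidiagonal.sigmaAntidiagonalEquivProd.tsum_eq c).symm
    have hsig : ∑' x : Σ n : ℕ, (Finset.HasAntidiagonal.antidiagonal n : Finset (ℕ × ℕ)), c x.2 =
        ∑' (n : ℕ) (p : (Finset.HasAntidiagonal.antidiagonal n : Finset (ℕ × ℕ))), c p :=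
      Summable.tsum_sigma' (fun n => (hasSum_fintype _).summable)
        (Finset.HasAntidiagonal.sigmaAntidiagonalEquivProd.summable_iff.mpr hcs)
    rw [hE, hsig]
    apply tsum_congr
    intro m
    rw [tsum_fintype, Finset.sum_coe_sort _ c,
      Finset.Nat.sum_antidiagonal_eq_sum_range_succ_mk]
    rw [laguerre, Finset.sum_mul]
    apply Finset.sum_congr rfl
    intro k hk
    rw [Finset.mem_range] at hk
    have hkm : k ≤ m := Nat.lt_succ_iff.mp hk
    simp only [hc]
    rw [Nat.sub_add_cancel hkm, show k + (m - k) = m by omega]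
    ring
  rw [hL, Summable.tsum_prod' hcs (fun k => hcs.prod_factor k)]
  have hinner' : ∀ k : ℕ, ∑' n, c (k, n) =
      ((ω * z / (ω - 1)) ^ k / (Nat.factorial k : ℝ)) * (1 / (1 - ω)) := by
    intro k
    have heq : ∀ n : ℕ, c (k, n) = ((-z) ^ k / (Nat.factorial k : ℝ) * ω ^ k) *
        (((n + k).choose k : ℝ) * ω ^ n) := by
      intro n
      simp only [hc, pow_add]
      ring
    rw [tsum_congr heq, tsum_mul_left, tsum_choose_mul_geometric_of_norm_lt_one k hω']
    have key : (ω * z / (ω - 1)) ^ k = (-z) ^ k * ω ^ k / (1 - ω) ^ k := by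
      rw [show ω * z / (ω - 1) = -z * ω / (1 - ω) by
        rw [show ω - 1 = -(1 - ω) by ring, div_neg]; ring]
      rw [div_pow, mul_pow]
    rw [key]
    simp only [div_eq_mul_inv, mul_inv, pow_succ, one_mul]
    ring
  rw [tsum_congr hinner', tsum_mul_right]
  rw [Real.exp_eq_exp_ℝ, NormedSpace.exp_eq_tsum_div]
  ring
end

section
/- The first-order Marcum Q-function Q₁(a,b) is monotonically increasing in a for each fixed b ≥ 0; i.e., if 0 ≤ a₁ < a₂ then Q₁(a₁,b) ≤ Q₁(a₂,b), with strict inequality for b > 0. -/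
open MeasureTheory Real Set

namespace MQaux

/-- partial exp sum weight -/
noncomputable def mck (x : ℝ) (k : ℕ) : ℝ :=
  Real.exp (-x) * ∑ j ∈ Finset.range (k+1), x ^ j / (Nat.factorial j : ℝ)

/-- Poisson weight -/
noncomputable def mp (k : ℕ) (l : ℝ) : ℝ := Real.exp (-l) * l ^ k / (Nat.factorial k : ℝ)

noncomputable def mM (x l : ℝ) : ℝ := ∑' k : ℕ, mp k l * mck x k

lemma mck_nonneg {x : ℝ} (hx : 0 ≤ x) (k : ℕ) : 0 ≤ mck x k := by
  apply mul_nonneg (Real.exp_pos _).le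
  exact Finset.sum_nonneg fun j _ => div_nonneg (pow_nonneg hx j) (Nat.cast_nonneg _)

lemma mck_le_one {x : ℝ} (hx : 0 ≤ x) (k : ℕ) : mck x k ≤ 1 := by
  rw [mck, Real.exp_neg]
  rw [inv_mul_le_iff₀ (Real.exp_pos _)]
  calc ∑ j ∈ Finset.range (k + 1), x ^ j / (Nat.factorial j:ℝ) ≤ Real.exp x :=
        Real.sum_le_exp_of_nonneg hx (k+1)
    _ ≤ Real.exp x * 1 := by rw [mul_one]

lemma mck_succ_sub (x : ℝ) (k : ℕ) :
    mck x (k+1) - mck x k = Real.exp (-x) * (x ^ (k+1) / (Nat.factorial (k+1) : ℝ)) := by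
  rw [mck, mck, Finset.sum_range_succ (n := k+1)]
  ring

lemma mp_nonneg {l : ℝ} (hl : 0 ≤ l) (k : ℕ) : 0 ≤ mp k l :=
  div_nonneg (mul_nonneg (Real.exp_pos _).le (pow_nonneg hl k)) (Nat.cast_nonneg _)

lemma mp_le {l : ℝ} (hl : 0 ≤ l) (k : ℕ) : mp k l ≤ l ^ k / (Nat.factorial k : ℝ) := by
  rw [mp]
  gcongr
  nlinarith [Real.exp_le_one_iff.2 (neg_nonpos.2 hl), Real.exp_pos (-l), pow_nonneg hl k]

lemma summable_pw (l : ℝ) : Summable (fun k : ℕ => l ^ k / (Nat.factorial k : ℝ)) :=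
  Real.summable_pow_div_factorial l

end MQaux
namespace MQaux
open Filter

noncomputable def mphi (k : ℕ) (t : ℝ) : ℝ :=
  t * (t^2/2)^k * Real.exp (-(t^2/2)) / (Nat.factorial k : ℝ)

noncomputable def mG (k : ℕ) (t : ℝ) : ℝ :=
  -(Real.exp (-(t^2/2)) * ∑ j ∈ Finset.range (k+1), (t^2/2) ^ j / (Nat.factorial j : ℝ))

lemma hasDerivAt_expneg (u : ℝ) : HasDerivAt (fun u : ℝ => Real.exp (-u)) (-Real.exp (-u)) u := by
  exact ((Real.hasDerivAt_exp (-u)).comp u ((hasDerivAt_id u).neg)).congr_deriv (by simp)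

lemma hasDerivAt_expsum (k : ℕ) (u : ℝ) :
    HasDerivAt (fun u : ℝ =>
        -(Real.exp (-u) * ∑ j ∈ Finset.range (k+1), u ^ j / (Nat.factorial j : ℝ)))
      (Real.exp (-u) * u ^ k / (Nat.factorial k : ℝ)) u := by
  induction k with
  | zero =>
      have h := (hasDerivAt_expneg u).neg
      refine (h.congr_deriv ?_).congr_of_eventuallyEq (Filter.Eventually.of_forall fun v => ?_) <;> simp
  | succ k ih =>
      have hpow : HasDerivAt
          (fun u : ℝ => Real.exp (-u) * (u ^ (k+1) / (Nat.factorial (k+1) : ℝ)))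
          (-Real.exp (-u) * (u ^ (k+1) / (Nat.factorial (k+1) : ℝ)) +
            Real.exp (-u) * (((k:ℝ)+1) * u ^ k / (Nat.factorial (k+1) : ℝ))) u := by
        have := (hasDerivAt_expneg u).mul ((hasDerivAt_pow (k+1) u).div_const
          (Nat.factorial (k+1) : ℝ))
        refine this.congr_deriv ?_
        simp only [Nat.add_sub_cancel]
        push_cast
        ring
      have heq : (fun u : ℝ =>
          -(Real.exp (-u) * ∑ j ∈ Finset.range (k+2), u ^ j / (Nat.factorial j : ℝ))) =
          fun u : ℝ =>
            (-(Real.exp (-u) * ∑ j ∈ Finset.range (k+1), u ^ j / (Nat.factorial j : ℝ))) -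
              Real.exp (-u) * (u ^ (k+1) / (Nat.factorial (k+1) : ℝ)) := by
        funext u
        rw [Finset.sum_range_succ]
        ring
      rw [show k + 1 + 1 = k + 2 from rfl, heq]
      refine (ih.sub hpow).congr_deriv ?_
      have hk : (Nat.factorial k : ℝ) ≠ 0 := Nat.cast_ne_zero.2 (Nat.factorial_ne_zero k)
      rw [Nat.factorial_succ]
      push_cast
      field_simp
      ring

lemma hasDerivAt_mG (k : ℕ) (t : ℝ) : HasDerivAt (mG k) (mphi k t) t := by
  have h1 : HasDerivAt (fun t : ℝ => t^2/2) t t := by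
    simpa using (hasDerivAt_pow 2 t).div_const 2
  have h2 := (hasDerivAt_expsum k (t^2/2)).comp t h1
  have heq : mG k = (fun u : ℝ =>
      -(Real.exp (-u) * ∑ j ∈ Finset.range (k+1), u ^ j / (Nat.factorial j : ℝ))) ∘
      (fun t : ℝ => t^2/2) := rfl
  rw [heq]
  refine h2.congr_deriv ?_
  unfold mphi
  ring

lemma tendsto_mG (k : ℕ) : Tendsto (mG k) atTop (nhds 0) := by
  have h2 : Tendsto (fun t : ℝ => t^2/2) atTop atTop :=
    (tendsto_pow_atTop two_ne_zero).atTop_div_const (by norm_num)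
  have h3 : Tendsto (fun u : ℝ =>
      -(Real.exp (-u) * ∑ j ∈ Finset.range (k+1), u ^ j / (Nat.factorial j : ℝ)))
      atTop (nhds 0) := by
    have : Tendsto (fun u : ℝ =>
        ∑ j ∈ Finset.range (k+1), u ^ j / (Nat.factorial j : ℝ) * Real.exp (-u))
        atTop (nhds 0) := by
      rw [show (0:ℝ) = ∑ j ∈ Finset.range (k+1), 0 by simp]
      apply tendsto_finset_sum
      intro j _
      have := tendsto_pow_mul_exp_neg_atTop_nhds_zero j
      have h4 : Tendsto (fun u : ℝ => (u ^ j * Real.exp (-u)) / (Nat.factorial j : ℝ))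
          atTop (nhds (0 / (Nat.factorial j : ℝ))) := this.div_const _
      simpa [div_mul_eq_mul_div] using h4
    have h5 := this.neg
    simp only [neg_zero] at h5
    apply h5.congr
    intro u
    rw [Finset.mul_sum]
    congr 1
    apply Finset.sum_congr rfl
    intro j _
    ring
  have := h3.comp h2
  exact this

lemma mphi_nonneg {b : ℝ} (hb : 0 ≤ b) (k : ℕ) : ∀ t ∈ Ioi b, 0 ≤ mphi k t := by
  intro t ht
  have ht' : 0 ≤ t := le_trans hb (le_of_lt ht)
  unfold mphi
  positivity

lemma integrableOn_mphi {b : ℝ} (hb : 0 ≤ b) (k : ℕ) : IntegrableOn (mphi k) (Ioi b) :=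
  integrableOn_Ioi_deriv_of_nonneg (hasDerivAt_mG k b).continuousAt.continuousWithinAt
    (fun t _ => hasDerivAt_mG k t) (mphi_nonneg hb k) (tendsto_mG k)

lemma integral_mphi {b : ℝ} (hb : 0 ≤ b) (k : ℕ) :
    ∫ t in Ioi b, mphi k t = mck (b^2/2) k := by
  rw [integral_Ioi_of_hasDerivAt_of_tendsto (hasDerivAt_mG k b).continuousAt.continuousWithinAt
    (fun t _ => hasDerivAt_mG k t) (integrableOn_mphi hb k) (tendsto_mG k)]
  unfold mG mck
  ring

end MQaux

namespace MQaux

lemma term_eq (a t : ℝ) (k : ℕ) :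
    mp k (a^2/2) * mphi k t =
      (t * Real.exp (-(t^2+a^2)/2)) * (((a*t)^2/4)^k/((Nat.factorial k : ℝ))^2) := by
  unfold mp mphi
  rw [show ((a*t)^2/4) = (a^2/2)*(t^2/2) by ring, mul_pow,
    show -(t^2+a^2)/2 = -(a^2/2) + -(t^2/2) by ring, Real.exp_add]
  ring

lemma marcum_eq {a b : ℝ} (ha : 0 ≤ a) (hb : 0 ≤ b) :
    marcumQ1 a b = mM (b^2/2) (a^2/2) := by
  have hla : (0:ℝ) ≤ a^2/2 := by positivity
  have hInt : ∀ k : ℕ, Integrable (fun t => mp k (a^2/2) * mphi k t)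
      (volume.restrict (Ioi b)) := fun k => (integrableOn_mphi hb k).const_mul _
  have hnn : ∀ k : ℕ, ∀ t ∈ Ioi b, 0 ≤ mp k (a^2/2) * mphi k t := fun k t ht =>
    mul_nonneg (mp_nonneg hla k) (mphi_nonneg hb k t ht)
  have hNorm : ∀ k : ℕ, (∫ t in Ioi b, ‖mp k (a^2/2) * mphi k t‖) =
      mp k (a^2/2) * mck (b^2/2) k := by
    intro k
    calc (∫ t in Ioi b, ‖mp k (a^2/2) * mphi k t‖)
        = ∫ t in Ioi b, mp k (a^2/2) * mphi k t :=
          setIntegral_congr_fun measurableSet_Ioi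
            (fun t ht => Real.norm_of_nonneg (hnn k t ht))
      _ = mp k (a^2/2) * ∫ t in Ioi b, mphi k t := MeasureTheory.integral_const_mul _ _
      _ = mp k (a^2/2) * mck (b^2/2) k := by rw [integral_mphi hb k]
  have hSum : Summable fun k : ℕ => ∫ t in Ioi b, ‖mp k (a^2/2) * mphi k t‖ := by
    simp only [hNorm]
    refine Summable.of_nonneg_of_le
      (fun k => mul_nonneg (mp_nonneg hla k) (mck_nonneg (by positivity) k))
      (fun k => ?_) (summable_pw (a^2/2))
    calc mp k (a^2/2) * mck (b^2/2) k ≤ mp k (a^2/2) * 1 := by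
          exact mul_le_mul_of_nonneg_left (mck_le_one (by positivity) k) (mp_nonneg hla k)
      _ = mp k (a^2/2) := mul_one _
      _ ≤ (a^2/2)^k / (Nat.factorial k : ℝ) := mp_le hla k
  have key := MeasureTheory.integral_tsum_of_summable_integral_norm hInt hSum
  have hpt : ∀ t : ℝ, (∑' k : ℕ, mp k (a^2/2) * mphi k t) =
      t * Real.exp (-(t^2+a^2)/2) * besselI0 (a*t) := by
    intro t
    calc (∑' k : ℕ, mp k (a^2/2) * mphi k t)
        = ∑' k : ℕ, (t * Real.exp (-(t^2+a^2)/2)) *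
            (((a*t)^2/4)^k/((Nat.factorial k : ℝ))^2) := tsum_congr (term_eq a t)
      _ = (t * Real.exp (-(t^2+a^2)/2)) *
            ∑' k : ℕ, ((a*t)^2/4)^k/((Nat.factorial k : ℝ))^2 := tsum_mul_left
      _ = t * Real.exp (-(t^2+a^2)/2) * besselI0 (a*t) := by rw [besselI0]
  calc marcumQ1 a b
      = ∫ t in Ioi b, ∑' k : ℕ, mp k (a^2/2) * mphi k t := by
        unfold marcumQ1
        exact MeasureTheory.integral_congr_ae
          (Filter.Eventually.of_forall fun t => (hpt t).symm)
    _ = ∑' k : ℕ, ∫ t in Ioi b, mp k (a^2/2) * mphi k t := key.symm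
    _ = mM (b^2/2) (a^2/2) := by
        unfold mM
        refine tsum_congr fun k => ?_
        rw [MeasureTheory.integral_const_mul, integral_mphi hb k]

end MQaux

namespace MQaux
open Filter

noncomputable def md (k : ℕ) (l : ℝ) : ℝ := (if k = 0 then 0 else mp (k-1) l) - mp k l

lemma hasDerivAt_mp (k : ℕ) (l : ℝ) : HasDerivAt (fun l => mp k l) (md k l) l := by
  have h := ((hasDerivAt_expneg l).mul (hasDerivAt_pow k l)).div_const (Nat.factorial k : ℝ)
  have heq : (fun l => mp k l) = fun l : ℝ => Real.exp (-l) * l ^ k / (Nat.factorial k : ℝ) := rfl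
  rw [heq]
  refine h.congr_deriv ?_
  match k with
  | 0 => simp [md, mp]
  | (j+1) =>
      have hj : (Nat.factorial j : ℝ) ≠ 0 := Nat.cast_ne_zero.2 (Nat.factorial_ne_zero j)
      simp only [md, mp, Nat.succ_ne_zero, if_false, Nat.add_sub_cancel, Nat.factorial_succ]
      push_cast
      field_simp
      ring

lemma summable_shift (C : ℝ) :
    Summable (fun k : ℕ => C ^ (k-1) / (Nat.factorial (k-1) : ℝ)) := by
  apply (summable_nat_add_iff 1).1
  simpa using summable_pw C

lemma abs_mp_le {C : ℝ} (hC : 1 ≤ C) {l : ℝ} (hl : -1 < l) (hl2 : l ≤ C) (k : ℕ) :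
    |mp k l| ≤ Real.exp 1 * C ^ k / (Nat.factorial k : ℝ) := by
  have habs : |l| ≤ C := abs_le.2 ⟨by linarith, hl2⟩
  have hfac : (0:ℝ) < (Nat.factorial k : ℝ) := Nat.cast_pos.2 (Nat.factorial_pos k)
  rw [mp, abs_div, abs_mul, abs_pow, abs_of_pos hfac, abs_of_pos (Real.exp_pos _)]
  gcongr
  linarith

lemma hasDerivAt_mM {x : ℝ} (hx : 0 ≤ x) {R : ℝ} (hR : 0 < R) :
    ∀ l ∈ Ioo (-1 : ℝ) R, HasDerivAt (mM x) (∑' k : ℕ, md k l * mck x k) l := by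
  intro l hl
  set C := max 1 R with hC
  have hC1 : (1:ℝ) ≤ C := le_max_left _ _
  have hu : Summable (fun k : ℕ => Real.exp 1 * C ^ (k-1) / (Nat.factorial (k-1) : ℝ) +
      Real.exp 1 * C ^ k / (Nat.factorial k : ℝ)) := by
    apply Summable.add
    · simpa [mul_div_assoc] using (summable_shift C).mul_left (Real.exp 1)
    · simpa [mul_div_assoc] using (summable_pw C).mul_left (Real.exp 1)
  refine hasDerivAt_tsum_of_isPreconnected hu isOpen_Ioo
    (convex_Ioo (-1:ℝ) R).isPreconnected
    (g := fun k l => mp k l * mck x k) (g' := fun k l => md k l * mck x k)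
    (fun k y _ => (hasDerivAt_mp k y).mul_const _) (fun k y hy => ?_)
    (y₀ := 0) ⟨by norm_num, hR⟩ ?_ hl
  · -- bound
    have hyC : y ≤ C := le_trans hy.2.le (le_max_right _ _)
    have hmck : |mck x k| ≤ 1 := abs_le.2 ⟨by linarith [mck_nonneg hx k], mck_le_one hx k⟩
    calc ‖md k y * mck x k‖ = |md k y| * |mck x k| := abs_mul _ _
      _ ≤ |md k y| * 1 := mul_le_mul_of_nonneg_left hmck (abs_nonneg _)
      _ = |(if k = 0 then 0 else mp (k-1) y) - mp k y| := by rw [mul_one]; rfl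
      _ ≤ |(if k = 0 then 0 else mp (k-1) y)| + |mp k y| := abs_sub _ _
      _ ≤ Real.exp 1 * C ^ (k-1) / (Nat.factorial (k-1) : ℝ) +
            Real.exp 1 * C ^ k / (Nat.factorial k : ℝ) := by
          gcongr
          · split
            · simp only [abs_zero]; positivity
            · exact abs_mp_le hC1 hy.1 hyC (k-1)
          · exact abs_mp_le hC1 hy.1 hyC k
  · -- summable at 0
    apply summable_of_ne_finset_zero (s := {0})
    intro k hk
    have hk0 : k ≠ 0 := by simpa using hk
    simp [mp, zero_pow hk0]

lemma summable_mpmck {x l : ℝ} (hx : 0 ≤ x) (hl : 0 ≤ l) (m : ℕ) :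
    Summable (fun k : ℕ => mp k l * mck x (k + m)) := by
  refine Summable.of_nonneg_of_le
    (fun k => mul_nonneg (mp_nonneg hl k) (mck_nonneg hx _)) (fun k => ?_) (summable_pw l)
  calc mp k l * mck x (k+m) ≤ mp k l * 1 :=
        mul_le_mul_of_nonneg_left (mck_le_one hx _) (mp_nonneg hl k)
    _ = mp k l := mul_one _
    _ ≤ l ^ k / (Nat.factorial k : ℝ) := mp_le hl k

lemma D_eq {x l : ℝ} (hx : 0 ≤ x) (hl : 0 ≤ l) :
    ∑' k : ℕ, md k l * mck x k = ∑' k : ℕ, mp k l * (mck x (k+1) - mck x k) := by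
  have hA : Summable (fun k : ℕ => (if k = 0 then 0 else mp (k-1) l * mck x k)) := by
    apply (summable_nat_add_iff 1).1
    simpa using summable_mpmck hx hl 1
  have hB : Summable (fun k : ℕ => mp k l * mck x k) := by
    simpa using summable_mpmck hx hl 0
  have hA2 : Summable (fun k : ℕ => mp k l * mck x (k+1)) := summable_mpmck hx hl 1
  calc (∑' k : ℕ, md k l * mck x k)
      = ∑' k : ℕ, ((if k = 0 then 0 else mp (k-1) l * mck x k) - mp k l * mck x k) := by
        refine tsum_congr fun k => ?_
        unfold md
        split <;> ring
    _ = (∑' k : ℕ, (if k = 0 then 0 else mp (k-1) l * mck x k)) -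
          ∑' k : ℕ, mp k l * mck x k := Summable.tsum_sub hA hB
    _ = (∑' k : ℕ, mp k l * mck x (k+1)) - ∑' k : ℕ, mp k l * mck x k := by
        rw [Summable.tsum_eq_zero_add hA]
        simp
    _ = ∑' k : ℕ, (mp k l * mck x (k+1) - mp k l * mck x k) := (Summable.tsum_sub hA2 hB).symm
    _ = ∑' k : ℕ, mp k l * (mck x (k+1) - mck x k) :=
        tsum_congr fun k => (mul_sub _ _ _).symm

lemma D_nonneg {x l : ℝ} (hx : 0 ≤ x) (hl : 0 ≤ l) :
    0 ≤ ∑' k : ℕ, md k l * mck x k := by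
  rw [D_eq hx hl]
  refine tsum_nonneg fun k => mul_nonneg (mp_nonneg hl k) ?_
  rw [mck_succ_sub]
  positivity

lemma D_pos {x l : ℝ} (hx : 0 < x) (hl : 0 ≤ l) :
    0 < ∑' k : ℕ, md k l * mck x k := by
  rw [D_eq hx.le hl]
  have hsum : Summable (fun k : ℕ => mp k l * (mck x (k+1) - mck x k)) := by
    have := (summable_mpmck hx.le hl 1).sub (by simpa using summable_mpmck hx.le hl 0)
    simpa [mul_sub] using this
  refine Summable.tsum_pos hsum (fun k => mul_nonneg (mp_nonneg hl k) ?_) 0 ?_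
  · rw [mck_succ_sub]; positivity
  · have h1 : 0 < mp 0 l := by
      simp only [mp, pow_zero, Nat.factorial_zero]
      positivity
    have h2 : 0 < mck x 1 - mck x 0 := by
      rw [mck_succ_sub]
      positivity
    exact mul_pos h1 h2

end MQaux

namespace MQaux

lemma mM_le {x : ℝ} (hx : 0 ≤ x) {l1 l2 : ℝ} (h0 : 0 ≤ l1) (h12 : l1 ≤ l2) :
    mM x l1 ≤ mM x l2 := by
  have hl2 : 0 ≤ l2 := le_trans h0 h12
  have hR : (0:ℝ) < l2 + 1 := by linarith
  have key := hasDerivAt_mM hx hR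
  have hsub : Icc (0:ℝ) l2 ⊆ Ioo (-1:ℝ) (l2+1) := fun y hy =>
    ⟨by linarith [hy.1], by linarith [hy.2]⟩
  have hmono : MonotoneOn (mM x) (Icc (0:ℝ) l2) := by
    apply monotoneOn_of_deriv_nonneg (convex_Icc _ _)
    · exact fun y hy => (key y (hsub hy)).continuousAt.continuousWithinAt
    · intro y hy
      rw [interior_Icc] at hy
      exact (key y (hsub (Ioo_subset_Icc_self hy))).differentiableAt.differentiableWithinAt
    · intro y hy
      rw [interior_Icc] at hy
      rw [(key y (hsub (Ioo_subset_Icc_self hy))).deriv]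
      exact D_nonneg hx hy.1.le
  exact hmono ⟨h0, h12⟩ ⟨hl2, le_refl _⟩ h12

lemma mM_lt {x : ℝ} (hx : 0 < x) {l1 l2 : ℝ} (h0 : 0 ≤ l1) (h12 : l1 < l2) :
    mM x l1 < mM x l2 := by
  have hl2 : 0 ≤ l2 := le_trans h0 h12.le
  have hR : (0:ℝ) < l2 + 1 := by linarith
  have key := hasDerivAt_mM hx.le hR
  have hsub : Icc (0:ℝ) l2 ⊆ Ioo (-1:ℝ) (l2+1) := fun y hy =>
    ⟨by linarith [hy.1], by linarith [hy.2]⟩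
  have hmono : StrictMonoOn (mM x) (Icc (0:ℝ) l2) := by
    apply strictMonoOn_of_deriv_pos (convex_Icc _ _)
    · exact fun y hy => (key y (hsub hy)).continuousAt.continuousWithinAt
    · intro y hy
      rw [interior_Icc] at hy
      rw [(key y (hsub (Ioo_subset_Icc_self hy))).deriv]
      exact D_pos hx hy.1.le
  exact hmono ⟨h0, h12.le⟩ ⟨hl2, le_refl _⟩ h12

end MQaux

/-- Marcum Q is monotonically increasing in its first argument, strictly so for b > 0. -/
theorem marcumQ1_mono_first (b : ℝ) (hb : 0 ≤ b) (a₁ a₂ : ℝ)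
    (ha₁ : 0 ≤ a₁) (h : a₁ < a₂) :
    marcumQ1 a₁ b ≤ marcumQ1 a₂ b ∧ (0 < b → marcumQ1 a₁ b < marcumQ1 a₂ b) := by
  have ha₂ : 0 ≤ a₂ := le_trans ha₁ h.le
  have hx : (0:ℝ) ≤ b^2/2 := by positivity
  have hsq : a₁^2 < a₂^2 := by nlinarith
  have hl0 : (0:ℝ) ≤ a₁^2/2 := by positivity
  have hlt : a₁^2/2 < a₂^2/2 := by linarith
  rw [MQaux.marcum_eq ha₁ hb, MQaux.marcum_eq ha₂ hb]
  constructor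
  · exact MQaux.mM_le hx hl0 hlt.le
  · intro hbpos
    have hxpos : (0:ℝ) < b^2/2 := by positivity
    exact MQaux.mM_lt hxpos hl0 hlt
end

section
/- For each x ≥ 0, the function η ↦ g_x(η) = (1/2)·exp(−(x+η)/2)·I₀(√(xη)) integrates to 1 over [0, ∞); i.e., it is a probability density. -/
open MeasureTheory Real Set

lemma integrableOn_pow_exp_half (k : ℕ) :
    IntegrableOn (fun t : ℝ => t ^ k * Real.exp (-t / 2)) (Ioi 0) := by
  have h := integrableOn_rpow_mul_exp_neg_mul_rpow (p := 1) (s := (k : ℝ)) (b := 1/2)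
    (lt_of_lt_of_le neg_one_lt_zero (Nat.cast_nonneg k)) zero_lt_one (by norm_num)
  refine h.congr_fun (fun t ht => ?_) measurableSet_Ioi
  dsimp only
  rw [Real.rpow_natCast, Real.rpow_one]
  ring_nf

lemma integral_pow_exp_half (k : ℕ) :
    ∫ t in Ioi (0:ℝ), t ^ k * Real.exp (-t / 2) = 2 ^ (k+1) * (Nat.factorial k : ℝ) := by
  have h := integral_rpow_mul_exp_neg_mul_Ioi (a := (k:ℝ)+1) (r := 1/2) (by positivity)
    (by norm_num)
  rw [add_sub_cancel_right] at h
  rw [show ((1:ℝ)/(1/2)) = 2 by norm_num] at h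
  have h2 : ((2:ℝ)) ^ ((k:ℝ)+1) = 2 ^ (k+1) := by
    rw [show ((k:ℝ)+1) = ((k+1 : ℕ) : ℝ) by push_cast; ring, Real.rpow_natCast]
  rw [h2, Real.Gamma_nat_eq_factorial] at h
  rw [← h]
  refine setIntegral_congr_fun measurableSet_Ioi (fun t ht => ?_)
  rw [Real.rpow_natCast]
  ring_nf

/-- For each x ≥ 0, the map η ↦ g_x(η) is a probability density on [0,∞). -/
theorem g_integrates_to_one (x : ℝ) (hx : 0 ≤ x) :
    ∫ η in Set.Ioi (0 : ℝ), g x η = 1 := by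
  set f : ℕ → ℝ → ℝ := fun k η =>
    ((1/2) * Real.exp (-x/2) * (x/4)^k / (Nat.factorial k : ℝ)^2) * (η ^ k * Real.exp (-η/2))
    with hf
  -- pointwise equality on Ioi 0
  have hgf : ∀ η ∈ Ioi (0:ℝ), g x η = ∑' k, f k η := by
    intro η hη
    have hxη : 0 ≤ x * η := mul_nonneg hx (le_of_lt hη)
    unfold g besselI0
    rw [Real.sq_sqrt hxη, ← tsum_mul_left]
    refine tsum_congr (fun k => ?_)
    rw [hf]
    have : Real.exp (-(x+η)/2) = Real.exp (-x/2) * Real.exp (-η/2) := by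
      rw [← Real.exp_add]; ring_nf
    rw [this]
    rw [show (x*η/4)^k = (x/4)^k * η^k by rw [← mul_pow]; ring_nf]
    ring
  -- integrability of each term
  have hint : ∀ k, IntegrableOn (f k) (Ioi 0) := fun k =>
    (integrableOn_pow_exp_half k).const_mul _
  -- value of each term's integral
  have hval : ∀ k, ∫ η in Ioi (0:ℝ), f k η = Real.exp (-x/2) * ((x/2)^k / (Nat.factorial k : ℝ)) := by
    intro k
    rw [hf]
    simp only []
    rw [integral_const_mul, integral_pow_exp_half]
    have hk : (Nat.factorial k : ℝ) ≠ 0 := Nat.cast_ne_zero.2 (Nat.factorial_ne_zero k)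
    field_simp
    rw [show x/4 = x/2*(1/2) by ring, mul_pow, pow_succ]
    have h12 : (1/2:ℝ)^k * 2^k = 1 := by rw [← mul_pow]; norm_num
    linear_combination (2*(x/2)^k) * h12
  -- nonnegativity
  have hnn : ∀ k, ∀ η ∈ Ioi (0:ℝ), 0 ≤ f k η := by
    intro k η hη
    have : (0:ℝ) < η := hη
    positivity
  -- swap sum and integral
  have hswap : ∫ η in Ioi (0:ℝ), (∑' k, f k η) = ∑' k, ∫ η in Ioi (0:ℝ), f k η := by
    refine integral_tsum (fun k => (hint k).aestronglyMeasurable) ?_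
    have hlin : ∀ k, ∫⁻ η in Ioi (0:ℝ), ‖f k η‖ₑ
        = ENNReal.ofReal (Real.exp (-x/2) * ((x/2)^k / (Nat.factorial k : ℝ))) := by
      intro k
      rw [← hval k, ofReal_integral_eq_lintegral_ofReal (hint k)
        ((ae_restrict_iff' measurableSet_Ioi).2 (Filter.Eventually.of_forall (hnn k)))]
      refine lintegral_congr_ae ?_
      filter_upwards [ae_restrict_mem measurableSet_Ioi] with η hη
      rw [← Real.enorm_eq_ofReal (hnn k η hη)]
    simp_rw [hlin]
    rw [← ENNReal.ofReal_tsum_of_nonneg]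
    · exact ENNReal.ofReal_ne_top
    · intro k
      have hk : (0:ℝ) ≤ (x/2)^k := by positivity
      positivity
    · exact (Real.summable_pow_div_factorial (x/2)).mul_left _
  rw [setIntegral_congr_fun measurableSet_Ioi hgf, hswap]
  simp_rw [hval]
  rw [tsum_mul_left]
  have : ∑' k : ℕ, (x/2)^k / (Nat.factorial k : ℝ) = Real.exp (x/2) := by
    rw [Real.exp_eq_exp_ℝ, NormedSpace.exp_eq_tsum_div]
  rw [this, ← Real.exp_add, show -x/2 + x/2 = 0 by ring, Real.exp_zero]
end
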